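/- arXiv:2103.16055 — 2 statements merged into one kernel-verified Lean document; each statement's English description precedes it below -/
import Mathlib

section
/- Let D, S, U, T be positive integers, κ an integer with 1 ≤ κ ≤ D, and let F : ℝ^D → ℝ be differentiable with L-Lipschitz gradient for some L > 0 (so that F(y) ≤ F(x) + ⟨∇F(x), y − x⟩ + (L/2)‖y − x‖² for all x, y). Let w* be a global minimizer of F. Let K_1, …, K_U > 0 with K = Σ_{i=1}^U K_i, and fix constants ρ₁ ≥ 0, 0 ≤ ρ₂ < 1, C ≥ 0, G ≥ 0, δ ∈ (0,1), σ ≥ 0. For each t ∈ {1, …, T}, let β_{i,t} ∈ {0,1} (not all zero) and b_t > 0, and suppose the iterates satisfy w_t = w_{t−1} − (1/L)(∇F(w_{t−1}) − o_t), where the aggregation-error vector o_t ∈ ℝ^D obeys ‖o_t‖² ≤ (1/K)·Σ_{i=1}^U K_i(ρ₁ + ρ₂‖∇F(w_{t−1})‖²)(1 − β_{i,t}) + C²·(1 + (1+δ)·((D−κ)/(S·D))·G² + σ²/(Σ_{i=1}^U K_i β_{i,t} b_t)²) + Σ_{i=1}^U β_{i,t}·(1+δ)·((D−κ)/D)·G².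 Then (1/T)·Σ_{t=1}^T ‖∇F(w_{t−1})‖² ≤ (2L/(T(1−ρ₂)))·(F(w_0) − F(w*)) + (2L/(T(1−ρ₂)))·Σ_{t=1}^T B_t, where B_t = (Σ_{i=1}^U K_i ρ₁ (1 − β_{i,t}))/(2LK) + (C²/(2L))·(1 + (1+δ)·((D−κ)/(S·D))·G² + σ²/(Σ_{i=1}^U K_i β_{i,t} b_t)²) + Σ_{i=1}^U β_{i,t}·(1+δ)·((D−κ)/(2LD))·G². -/
open scoped RealInnerProductSpace BigOperators

set_option maxHeartbeats 1000000 in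
/-- Theorem 1 of the paper: expected convergence rate of 1-bit CS federated
learning over the air with learning rate `α = 1/L`, stated deterministically. -/
theorem obcsaa_convergence_rate
    (D S U T : ℕ) (hD : 0 < D) (hS : 0 < S) (hU : 0 < U) (hT : 0 < T)
    (κ : ℕ) (hκ1 : 1 ≤ κ) (hκD : κ ≤ D)
    (F : EuclideanSpace ℝ (Fin D) → ℝ) (L : ℝ) (hL : 0 < L)
    (hdiff : Differentiable ℝ F)
    (hlip : ∀ x y, ‖gradient F x - gradient F y‖ ≤ L * ‖x - y‖)
    (hdesc : ∀ x y, F y ≤ F x + ⟪gradient F x, y - x⟫ + (L / 2) * ‖y - x‖ ^ 2)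
    (wstar : EuclideanSpace ℝ (Fin D)) (hmin : ∀ x, F wstar ≤ F x)
    (K : Fin U → ℝ) (hK : ∀ i, 0 < K i)
    (ρ₁ ρ₂ C G δ σ : ℝ)
    (hρ₁ : 0 ≤ ρ₁) (hρ₂0 : 0 ≤ ρ₂) (hρ₂1 : ρ₂ < 1)
    (hC : 0 ≤ C) (hG : 0 ≤ G) (hδ0 : 0 < δ) (hδ1 : δ < 1) (hσ : 0 ≤ σ)
    (β : Fin T → Fin U → ℝ) (hβ : ∀ t i, β t i = 0 ∨ β t i = 1)
    (hβne : ∀ t, ∃ i, β t i ≠ 0)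
    (b : Fin T → ℝ) (hb : ∀ t, 0 < b t)
    (w : ℕ → EuclideanSpace ℝ (Fin D)) (o : Fin T → EuclideanSpace ℝ (Fin D))
    (hupd : ∀ t : Fin T,
      w (t.1 + 1) = w t.1 - (1 / L) • (gradient F (w t.1) - o t))
    (ho : ∀ t : Fin T,
      ‖o t‖ ^ 2 ≤
        (1 / (∑ i, K i)) *
            ∑ i, K i * (ρ₁ + ρ₂ * ‖gradient F (w t.1)‖ ^ 2) * (1 - β t i)
          + C ^ 2 * (1 + (1 + δ) * (((D : ℝ) - κ) / (S * D)) * G ^ 2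
              + σ ^ 2 / (∑ i, K i * β t i * b t) ^ 2)
          + ∑ i, β t i * (1 + δ) * (((D : ℝ) - κ) / D) * G ^ 2) :
    (1 / (T : ℝ)) * ∑ t : Fin T, ‖gradient F (w t.1)‖ ^ 2 ≤
      (2 * L / ((T : ℝ) * (1 - ρ₂))) * (F (w 0) - F wstar)
      + (2 * L / ((T : ℝ) * (1 - ρ₂))) *
        ∑ t : Fin T,
          ((∑ i, K i * ρ₁ * (1 - β t i)) / (2 * L * ∑ i, K i)
          + (C ^ 2 / (2 * L)) * (1 + (1 + δ) * (((D : ℝ) - κ) / (S * D)) * G ^ 2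
              + σ ^ 2 / (∑ i, K i * β t i * b t) ^ 2)
          + ∑ i, β t i * (1 + δ) * (((D : ℝ) - κ) / (2 * L * D)) * G ^ 2) := by

  have hTpos : (0:ℝ) < T := by exact_mod_cast hT
  have hLne : (L:ℝ) ≠ 0 := ne_of_gt hL
  have hKpos : 0 < ∑ i, K i := Finset.sum_pos (fun i _ => hK i) ⟨⟨0, hU⟩, Finset.mem_univ _⟩
  have hρ : 0 < 1 - ρ₂ := by linarith
  have key : ∀ t : Fin T, (1 - ρ₂) * ‖gradient F (w t.1)‖ ^ 2 ≤
      2 * L * (F (w t.1) - F (w (t.1 + 1))) + 2 * L *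
        ((∑ i, K i * ρ₁ * (1 - β t i)) / (2 * L * ∑ i, K i)
          + (C ^ 2 / (2 * L)) * (1 + (1 + δ) * (((D : ℝ) - κ) / (S * D)) * G ^ 2
              + σ ^ 2 / (∑ i, K i * β t i * b t) ^ 2)
          + ∑ i, β t i * (1 + δ) * (((D : ℝ) - κ) / (2 * L * D)) * G ^ 2) := by
    intro t
    set g := gradient F (w t.1) with hg
    have hyx : w (t.1 + 1) - w t.1 = -((1 / L) • (g - o t)) := by
      rw [hupd t]; abel
    have hd := hdesc (w t.1) (w (t.1 + 1))
    rw [hyx, inner_neg_right, real_inner_smul_right, norm_neg, norm_smul,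
      inner_sub_right, real_inner_self_eq_norm_sq, Real.norm_eq_abs,
      abs_of_pos (by positivity : (0:ℝ) < 1 / L)] at hd
    have hnn : ‖g - o t‖ ^ 2 = ‖g‖ ^ 2 - 2 * ⟪g, o t⟫ + ‖o t‖ ^ 2 :=
      norm_sub_sq_real g (o t)
    have hstep : F (w (t.1 + 1)) ≤ F (w t.1) - (1/(2*L)) * (‖g‖ ^ 2 - ‖o t‖ ^ 2) := by
      refine hd.trans (le_of_eq ?_)
      rw [mul_pow, hnn]
      field_simp
      ring
    have h2' : (1/(2*L)) * (‖g‖ ^ 2 - ‖o t‖ ^ 2) ≤ F (w t.1) - F (w (t.1 + 1)) := by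
      linarith
    have h3 : ‖g‖ ^ 2 - ‖o t‖ ^ 2 ≤ 2 * L * (F (w t.1) - F (w (t.1 + 1))) := by
      have h4 := mul_le_mul_of_nonneg_left h2' (by positivity : (0:ℝ) ≤ 2 * L)
      calc ‖g‖ ^ 2 - ‖o t‖ ^ 2
          = 2 * L * ((1/(2*L)) * (‖g‖ ^ 2 - ‖o t‖ ^ 2)) := by field_simp
        _ ≤ _ := h4
    have hob := ho t
    have hsplit : ∑ i, K i * (ρ₁ + ρ₂ * ‖g‖ ^ 2) * (1 - β t i) ≤
        (∑ i, K i * ρ₁ * (1 - β t i)) + (∑ i, K i) * (ρ₂ * ‖g‖ ^ 2) := by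
      have h5 : ∀ i ∈ Finset.univ (α := Fin U),
          K i * (ρ₁ + ρ₂ * ‖g‖ ^ 2) * (1 - β t i) ≤
            K i * ρ₁ * (1 - β t i) + K i * (ρ₂ * ‖g‖ ^ 2) := by
        intro i _
        have hKX : 0 ≤ K i * (ρ₂ * ‖g‖ ^ 2) :=
          mul_nonneg (hK i).le (mul_nonneg hρ₂0 (sq_nonneg _))
        rcases hβ t i with h | h <;> rw [h] <;> nlinarith [hKX]
      calc ∑ i, K i * (ρ₁ + ρ₂ * ‖g‖ ^ 2) * (1 - β t i)
          ≤ ∑ i, (K i * ρ₁ * (1 - β t i) + K i * (ρ₂ * ‖g‖ ^ 2)) :=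
            Finset.sum_le_sum h5
        _ = (∑ i, K i * ρ₁ * (1 - β t i)) + (∑ i, K i) * (ρ₂ * ‖g‖ ^ 2) := by
            rw [Finset.sum_add_distrib, ← Finset.sum_mul]
    have hsplit2 : (1 / (∑ i, K i)) *
        ∑ i, K i * (ρ₁ + ρ₂ * ‖g‖ ^ 2) * (1 - β t i) ≤
        (∑ i, K i * ρ₁ * (1 - β t i)) / (∑ i, K i) + ρ₂ * ‖g‖ ^ 2 := by
      have := mul_le_mul_of_nonneg_left hsplit
        (le_of_lt (by positivity : (0:ℝ) < 1 / (∑ i, K i)))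
      calc (1 / (∑ i, K i)) * ∑ i, K i * (ρ₁ + ρ₂ * ‖g‖ ^ 2) * (1 - β t i)
          ≤ (1 / (∑ i, K i)) *
              ((∑ i, K i * ρ₁ * (1 - β t i)) + (∑ i, K i) * (ρ₂ * ‖g‖ ^ 2)) := this
        _ = (∑ i, K i * ρ₁ * (1 - β t i)) / (∑ i, K i) + ρ₂ * ‖g‖ ^ 2 := by
            rw [mul_add, ← mul_assoc, one_div_mul_cancel (ne_of_gt hKpos), one_mul,
              one_div_mul_eq_div]
    have hB : 2 * L *
        ((∑ i, K i * ρ₁ * (1 - β t i)) / (2 * L * ∑ i, K i)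
          + (C ^ 2 / (2 * L)) * (1 + (1 + δ) * (((D : ℝ) - κ) / (S * D)) * G ^ 2
              + σ ^ 2 / (∑ i, K i * β t i * b t) ^ 2)
          + ∑ i, β t i * (1 + δ) * (((D : ℝ) - κ) / (2 * L * D)) * G ^ 2) =
        (∑ i, K i * ρ₁ * (1 - β t i)) / (∑ i, K i)
          + C ^ 2 * (1 + (1 + δ) * (((D : ℝ) - κ) / (S * D)) * G ^ 2
              + σ ^ 2 / (∑ i, K i * β t i * b t) ^ 2)
          + ∑ i, β t i * (1 + δ) * (((D : ℝ) - κ) / D) * G ^ 2 := by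
      have hDpos : (0:ℝ) < (D:ℝ) := by exact_mod_cast hD
      set A := ∑ i, K i * ρ₁ * (1 - β t i) with hA
      set Ks := ∑ i, K i with hKs
      set Q := 1 + (1 + δ) * (((D : ℝ) - κ) / (S * D)) * G ^ 2
          + σ ^ 2 / (∑ i, K i * β t i * b t) ^ 2 with hQ
      have hKsne : Ks ≠ 0 := ne_of_gt hKpos
      have e1 : 2 * L * (A / (2 * L * Ks)) = A / Ks := by
        field_simp
      have e2 : 2 * L * (C ^ 2 / (2 * L) * Q) = C ^ 2 * Q := by
        have h9 : 2 * L * (C ^ 2 / (2 * L)) = C ^ 2 := by field_simp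
        calc 2 * L * (C ^ 2 / (2 * L) * Q) = (2 * L * (C ^ 2 / (2 * L))) * Q := by ring
          _ = C ^ 2 * Q := by rw [h9]
      have e3 : 2 * L * (∑ i, β t i * (1 + δ) * (((D : ℝ) - κ) / (2 * L * D)) * G ^ 2)
          = ∑ i, β t i * (1 + δ) * (((D : ℝ) - κ) / D) * G ^ 2 := by
        rw [Finset.mul_sum]
        refine Finset.sum_congr rfl fun i _ => ?_
        have h9 : 2 * L * (((D : ℝ) - κ) / (2 * L * D)) = ((D : ℝ) - κ) / D := by
          field_simp
        calc 2 * L * (β t i * (1 + δ) * (((D : ℝ) - κ) / (2 * L * D)) * G ^ 2)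
            = β t i * (1 + δ) * (2 * L * (((D : ℝ) - κ) / (2 * L * D))) * G ^ 2 := by ring
          _ = _ := by rw [h9]
      rw [mul_add, mul_add, e1, e2, e3]
    rw [hB]
    linarith [hsplit2, hob, h3]
  have hsumall := Finset.sum_le_sum (fun t (_ : t ∈ Finset.univ) => key t)
  rw [← Finset.mul_sum, Finset.sum_add_distrib, ← Finset.mul_sum, ← Finset.mul_sum]
    at hsumall
  have htel : ∑ t : Fin T, (F (w t.1) - F (w (t.1 + 1))) = F (w 0) - F (w T) := by
    rw [Fin.sum_univ_eq_sum_range (fun k => F (w k) - F (w (k + 1))) T]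
    exact Finset.sum_range_sub' (fun k => F (w k)) T
  rw [htel] at hsumall
  have hsum2 : (1 - ρ₂) * ∑ t : Fin T, ‖gradient F (w t.1)‖ ^ 2 ≤
      2 * L * (F (w 0) - F wstar) + 2 * L *
        ∑ t : Fin T,
          ((∑ i, K i * ρ₁ * (1 - β t i)) / (2 * L * ∑ i, K i)
          + (C ^ 2 / (2 * L)) * (1 + (1 + δ) * (((D : ℝ) - κ) / (S * D)) * G ^ 2
              + σ ^ 2 / (∑ i, K i * β t i * b t) ^ 2)
          + ∑ i, β t i * (1 + δ) * (((D : ℝ) - κ) / (2 * L * D)) * G ^ 2) := by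
    have := hmin (w T)
    have h6 : F (w 0) - F (w T) ≤ F (w 0) - F wstar := by linarith
    have h7 := mul_le_mul_of_nonneg_left h6 (by positivity : (0:ℝ) ≤ 2 * L)
    linarith [hsumall]
  have main : ∀ Sv Z : ℝ, (1 - ρ₂) * Sv ≤ 2 * L * Z →
      (1 / (T : ℝ)) * Sv ≤ (2 * L / ((T : ℝ) * (1 - ρ₂))) * Z := by
    intro Sv Z h
    have hpos : (0:ℝ) < (T : ℝ) * (1 - ρ₂) := by positivity
    rw [div_mul_eq_mul_div (2 * L) ((T : ℝ) * (1 - ρ₂)) Z, le_div_iff₀ hpos]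
    have heq : 1 / (T : ℝ) * Sv * ((T : ℝ) * (1 - ρ₂)) = (1 - ρ₂) * Sv := by
      field_simp
    rw [heq]
    exact h
  rw [← mul_add]
  exact main _ _ (by linarith [hsum2])
end

section
/- Let D be a positive integer and F : ℝ^D → ℝ be differentiable with L-Lipschitz gradient for some L > 0 (so that F(y) ≤ F(x) + ⟨∇F(x), y − x⟩ + (L/2)‖y − x‖² for all x, y). Let U be a positive integer, K_1, …, K_U > 0 with K = Σ_{i=1}^U K_i, β_1, …, β_U ∈ {0,1}, ρ₁ ≥ 0, ρ₂ ≥ 0, and E ≥ 0. Suppose w' = w − (1/L)(∇F(w) − o) where the error vector o ∈ ℝ^D satisfies ‖o‖² ≤ (1/K)·Σ_{i=1}^U K_i(ρ₁ + ρ₂‖∇F(w)‖²)(1 − β_i) + E. Then F(w') ≤ F(w) − (1/(2L) − Σ_{i=1}^U K_i ρ₂ (1 − β_i)/(2LK))·‖∇F(w)‖² + Σ_{i=1}^U K_i ρ₁ (1 − β_i)/(2LK) + E/(2L). -/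
open scoped RealInnerProductSpace BigOperators

/-- Per-iteration inequality (equation (48) of the paper), combining the
one-step descent inequality with the bound on `‖o‖²`. -/
theorem per_iteration_descent
    (D : ℕ) (hD : 0 < D)
    (F : EuclideanSpace ℝ (Fin D) → ℝ) (L : ℝ) (hL : 0 < L)
    (hdiff : Differentiable ℝ F)
    (hlip : ∀ x y, ‖gradient F x - gradient F y‖ ≤ L * ‖x - y‖)
    (hdesc : ∀ x y, F y ≤ F x + ⟪gradient F x, y - x⟫ + (L / 2) * ‖y - x‖ ^ 2)
    (U : ℕ) (hU : 0 < U) (K : Fin U → ℝ) (hK : ∀ i, 0 < K i)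
    (β : Fin U → ℝ) (hβ : ∀ i, β i = 0 ∨ β i = 1)
    (ρ₁ ρ₂ E : ℝ) (hρ₁ : 0 ≤ ρ₁) (hρ₂ : 0 ≤ ρ₂) (hE : 0 ≤ E)
    (w o : EuclideanSpace ℝ (Fin D))
    (ho : ‖o‖ ^ 2 ≤
      (1 / (∑ i, K i)) *
          ∑ i, K i * (ρ₁ + ρ₂ * ‖gradient F w‖ ^ 2) * (1 - β i) + E) :
    F (w - (1 / L) • (gradient F w - o)) ≤
      F w
      - (1 / (2 * L) - (∑ i, K i * ρ₂ * (1 - β i)) / (2 * L * ∑ i, K i)) *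
          ‖gradient F w‖ ^ 2
      + (∑ i, K i * ρ₁ * (1 - β i)) / (2 * L * ∑ i, K i)
      + E / (2 * L) := by
  set g := gradient F w with hgdef
  have hL' : (L : ℝ) ≠ 0 := ne_of_gt hL
  have hKs : 0 < ∑ i, K i :=
    Finset.sum_pos (fun i _ => hK i) ⟨⟨0, hU⟩, Finset.mem_univ _⟩
  have key : F (w - (1 / L) • (g - o)) ≤ F w - ‖g‖ ^ 2 / (2 * L) + ‖o‖ ^ 2 / (2 * L) := by
    have h := hdesc w (w - (1 / L) • (g - o))
    have hsub : (w - (1 / L) • (g - o)) - w = -((1 / L) • (g - o)) := by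
      abel
    rw [hsub] at h
    have hinner : ⟪g, -((1 / L) • (g - o))⟫ = -(1 / L) * (‖g‖ ^ 2 - ⟪g, o⟫) := by
      rw [inner_neg_right, real_inner_smul_right, inner_sub_right,
        real_inner_self_eq_norm_sq]
      ring
    have hnorm : ‖-((1 / L) • (g - o))‖ ^ 2
        = (1 / L) ^ 2 * (‖g‖ ^ 2 - 2 * ⟪g, o⟫ + ‖o‖ ^ 2) := by
      rw [norm_neg, norm_smul, mul_pow, Real.norm_eq_abs, sq_abs, norm_sub_sq_real]
    rw [hinner, hnorm] at h
    have heq : F w + -(1 / L) * (‖g‖ ^ 2 - ⟪g, o⟫)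
        + (L / 2) * ((1 / L) ^ 2 * (‖g‖ ^ 2 - 2 * ⟪g, o⟫ + ‖o‖ ^ 2))
        = F w - ‖g‖ ^ 2 / (2 * L) + ‖o‖ ^ 2 / (2 * L) := by
      field_simp
      ring
    linarith [h, heq.le]
  have hsum : ∑ i, K i * (ρ₁ + ρ₂ * ‖g‖ ^ 2) * (1 - β i)
      = (∑ i, K i * ρ₁ * (1 - β i)) + ‖g‖ ^ 2 * ∑ i, K i * ρ₂ * (1 - β i) := by
    rw [Finset.mul_sum, ← Finset.sum_add_distrib]
    exact Finset.sum_congr rfl fun i _ => by ring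
  rw [hsum] at ho
  have hdiv : ‖o‖ ^ 2 / (2 * L) ≤
      (∑ i, K i * ρ₂ * (1 - β i)) / (2 * L * ∑ i, K i) * ‖g‖ ^ 2
      + (∑ i, K i * ρ₁ * (1 - β i)) / (2 * L * ∑ i, K i) + E / (2 * L) := by
    have h2L : (0:ℝ) < 2 * L := by linarith
    calc ‖o‖ ^ 2 / (2 * L)
        ≤ ((1 / (∑ i, K i)) * ((∑ i, K i * ρ₁ * (1 - β i))
            + ‖g‖ ^ 2 * ∑ i, K i * ρ₂ * (1 - β i)) + E) / (2 * L) := by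
          gcongr
      _ = (∑ i, K i * ρ₂ * (1 - β i)) / (2 * L * ∑ i, K i) * ‖g‖ ^ 2
          + (∑ i, K i * ρ₁ * (1 - β i)) / (2 * L * ∑ i, K i) + E / (2 * L) := by
          field_simp
          simp only [mul_comm ρ₁, mul_comm ρ₂]
          ring
  have hexpand : (1 / (2 * L) - (∑ i, K i * ρ₂ * (1 - β i)) / (2 * L * ∑ i, K i))
      * ‖g‖ ^ 2
      = ‖g‖ ^ 2 / (2 * L)
        - (∑ i, K i * ρ₂ * (1 - β i)) / (2 * L * ∑ i, K i) * ‖g‖ ^ 2 := by ring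
  rw [hexpand]
  linarith [key, hdiv]
end
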